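/- CVaR of a continuous random variable as a tail expectation: if X has a continuous distribution function then CVaR_α(X) = E[-X | -X ≥ VaR_α(X)], where VaR_α(X) = inf{c ∈ ℝ : P(X + c < 0) ≤ α} and CVaR_α(X) = inf_η {(1/α)E[(η-X)^+] - η}. -/

import Mathlib

open MeasureTheory Real

lemma aux_pt (a v η : ℝ) :
    max (-v - a) 0 + (η + v) * ({x : ℝ | x < -v}.indicator (fun _ => (1:ℝ)) a)
      ≤ max (η - a) 0 := by
  simp only [Set.indicator_apply, Set.mem_setOf_eq]
  split_ifs with h
  · have h1 : max (-v - a) 0 = -v - a := max_eq_left (by linarith)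
    have h2 : η - a ≤ max (η - a) 0 := le_max_left _ _
    linarith
  · push_neg at h
    have h1 : max (-v - a) 0 = 0 := max_eq_right (by linarith)
    have h2 : (0:ℝ) ≤ max (η - a) 0 := le_max_right _ _
    linarith

lemma aux_max_indicator (η a : ℝ) :
    max (η - a) 0 = ({x : ℝ | x ≤ η}.indicator (fun x => η - x)) a := by
  simp only [Set.indicator_apply, Set.mem_setOf_eq]
  split_ifs with h
  · exact max_eq_left (by linarith)
  · exact max_eq_right (by push_neg at h; linarith)

lemma aux_atomless {Ω : Type*} [MeasurableSpace Ω] (μ : Measure Ω) [IsProbabilityMeasure μ]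
    (X : Ω → ℝ) (hX : Measurable X)
    (hcdf : Continuous fun c : ℝ => (μ {ω | X ω ≤ c}).toReal) (t : ℝ) :
    μ {ω | X ω = t} = 0 := by
  set F : ℝ → ℝ := fun c => (μ {ω | X ω ≤ c}).toReal with hF
  have key : ∀ s, s < t → (μ {ω | X ω = t}).toReal ≤ F t - F s := by
    intro s hs
    have hdisj : Disjoint {ω | X ω ≤ s} {ω | X ω = t} := by
      rw [Set.disjoint_left]
      intro ω h1 h2
      simp only [Set.mem_setOf_eq] at h1 h2
      linarith
    have hsub : {ω | X ω ≤ s} ∪ {ω | X ω = t} ⊆ {ω | X ω ≤ t} := by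
      intro ω hω
      rcases hω with h | h
      · exact le_of_lt (lt_of_le_of_lt h hs)
      · exact le_of_eq h
    have hmu : μ {ω | X ω ≤ s} + μ {ω | X ω = t} ≤ μ {ω | X ω ≤ t} := by
      rw [← measure_union hdisj (hX (measurableSet_singleton t))]
      exact measure_mono hsub
    have h2 : (μ {ω | X ω ≤ s}).toReal + (μ {ω | X ω = t}).toReal
        ≤ (μ {ω | X ω ≤ t}).toReal := by
      rw [← ENNReal.toReal_add (measure_ne_top μ _) (measure_ne_top μ _)]
      exact ENNReal.toReal_mono (measure_ne_top μ _) hmu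
    simp only [hF]; linarith
  have htend : Filter.Tendsto (fun s => F t - F s) (nhdsWithin t (Set.Iio t)) (nhds 0) := by
    have : Filter.Tendsto F (nhdsWithin t (Set.Iio t)) (nhds (F t)) :=
      (hcdf.tendsto t).mono_left nhdsWithin_le_nhds
    have := (tendsto_const_nhds (x := F t)).sub this
    simpa using this
  have hle : (μ {ω | X ω = t}).toReal ≤ 0 := by
    refine ge_of_tendsto htend ?_
    filter_upwards [self_mem_nhdsWithin] with s hs
    exact key s hs
  have : (μ {ω | X ω = t}).toReal = 0 := le_antisymm hle ENNReal.toReal_nonneg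
  rw [ENNReal.toReal_eq_zero_iff] at this
  exact this.resolve_right (measure_ne_top μ _)

lemma aux_lt_le {Ω : Type*} [MeasurableSpace Ω] (μ : Measure Ω) [IsProbabilityMeasure μ]
    (X : Ω → ℝ) (hX : Measurable X)
    (hcdf : Continuous fun c : ℝ => (μ {ω | X ω ≤ c}).toReal) (t : ℝ) :
    μ {ω | X ω < t} = μ {ω | X ω ≤ t} := by
  have hset : {ω | X ω ≤ t} = {ω | X ω < t} ∪ {ω | X ω = t} := by
    ext ω; simp only [Set.mem_setOf_eq, Set.mem_union]; exact le_iff_lt_or_eq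
  refine le_antisymm (measure_mono fun ω h => (le_of_lt h : X ω ≤ t)) ?_
  rw [hset]
  calc μ ({ω | X ω < t} ∪ {ω | X ω = t}) ≤ μ {ω | X ω < t} + μ {ω | X ω = t} :=
        measure_union_le _ _
    _ = μ {ω | X ω < t} := by rw [aux_atomless μ X hX hcdf t, add_zero]

/-- CVaR of a random variable with continuous distribution function as a
tail expectation: `CVaR_α(X) = E[-X | -X ≥ VaR_α(X)]`, where
`VaR_α(X) = inf {c : P(X + c < 0) ≤ α}` and
`CVaR_α(X) = inf_η {(1/α) E[(η - X)⁺] - η}`.  The conditional expectation is written as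
the normalized integral over the event `{-X ≥ VaR_α(X)}`. -/
theorem cvar_tail_expectation
    {Ω : Type*} [MeasurableSpace Ω] (μ : Measure Ω) [IsProbabilityMeasure μ]
    (X : Ω → ℝ) (hX : Measurable X) (hXint : Integrable X μ)
    (hcdf : Continuous fun c : ℝ => (μ {ω | X ω ≤ c}).toReal)
    (α : ℝ) (hα0 : 0 < α) (hα1 : α < 1) :
    (⨅ η : ℝ, ((1 / α) * ∫ ω, max (η - X ω) 0 ∂μ - η))
      = (μ {ω | -X ω ≥ sInf {c : ℝ | (μ {ω | X ω + c < 0}).toReal ≤ α}}).toReal⁻¹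
          * ∫ ω in {ω | -X ω ≥ sInf {c : ℝ | (μ {ω | X ω + c < 0}).toReal ≤ α}},
              (-X ω) ∂μ := by
  have hFmeas : ∀ c : ℝ, MeasurableSet {ω | X ω ≤ c} := fun c => hX measurableSet_Iic
  set F : ℝ → ℝ := fun c => (μ {ω | X ω ≤ c}).toReal with hFdef
  have hSeq : {c : ℝ | (μ {ω | X ω + c < 0}).toReal ≤ α} = {c | F (-c) ≤ α} := by
    ext c
    have h1 : {ω | X ω + c < 0} = {ω | X ω < -c} := by
      ext ω; simp only [Set.mem_setOf_eq]; constructor <;> intro <;> linarith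
    simp only [Set.mem_setOf_eq, h1, aux_lt_le μ X hX hcdf (-c), hFdef]
  rw [hSeq]
  set v := sInf {c | F (-c) ≤ α} with hv
  have hGcont : Continuous fun c : ℝ => F (-c) := hcdf.comp continuous_neg
  have hclosed : IsClosed {c | F (-c) ≤ α} := isClosed_le hGcont continuous_const
  -- nonempty
  have hne : Set.Nonempty {c | F (-c) ≤ α} := by
    have hA : Antitone (fun n : ℕ => {ω | X ω ≤ -(n : ℝ)}) := by
      intro m n hmn ω hω
      simp only [Set.mem_setOf_eq] at *
      have : -(n : ℝ) ≤ -(m : ℝ) := by exact_mod_cast neg_le_neg (Nat.cast_le.2 hmn)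
      linarith
    have hint : (⋂ n : ℕ, {ω | X ω ≤ -(n : ℝ)}) = ∅ := by
      ext ω
      simp only [Set.mem_iInter, Set.mem_setOf_eq, Set.mem_empty_iff_false, iff_false,
        not_forall, not_le]
      obtain ⟨n, hn⟩ := exists_nat_gt (-X ω)
      exact ⟨n, by linarith⟩
    have htd := tendsto_measure_iInter_atTop (μ := μ) (s := fun n : ℕ => {ω | X ω ≤ -(n : ℝ)})
      (fun n => (hFmeas (-(n : ℝ))).nullMeasurableSet) hA ⟨0, measure_ne_top μ _⟩
    rw [hint, measure_empty] at htd
    have hev : ∀ᶠ n : ℕ in Filter.atTop, μ {ω | X ω ≤ -(n : ℝ)} < ENNReal.ofReal α :=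
      htd.eventually_lt_const (by simp [ENNReal.ofReal_pos, hα0])
    obtain ⟨n, hn⟩ := hev.exists
    refine ⟨(n : ℝ), ?_⟩
    simp only [Set.mem_setOf_eq, hFdef]
    exact ENNReal.toReal_le_of_le_ofReal hα0.le hn.le
  -- bounded below
  have hbdd : BddBelow {c | F (-c) ≤ α} := by
    have hM : Monotone (fun n : ℕ => {ω | X ω ≤ (n : ℝ)}) := by
      intro m n hmn ω hω
      simp only [Set.mem_setOf_eq] at *
      have : (m : ℝ) ≤ (n : ℝ) := by exact_mod_cast hmn
      linarith
    have hun : (⋃ n : ℕ, {ω | X ω ≤ (n : ℝ)}) = Set.univ := by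
      ext ω
      simp only [Set.mem_iUnion, Set.mem_setOf_eq, Set.mem_univ, iff_true]
      obtain ⟨n, hn⟩ := exists_nat_gt (X ω)
      exact ⟨n, hn.le⟩
    have htd := tendsto_measure_iUnion_atTop (μ := μ) hM
    rw [hun, measure_univ] at htd
    have hev : ∀ᶠ n : ℕ in Filter.atTop, ENNReal.ofReal α < μ {ω | X ω ≤ (n : ℝ)} :=
      htd.eventually_const_lt (by
        rw [← ENNReal.ofReal_one]
        exact ENNReal.ofReal_lt_ofReal_iff_of_nonneg hα0.le |>.2 hα1)
    obtain ⟨n, hn⟩ := hev.exists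
    refine ⟨-(n : ℝ), fun c hc => ?_⟩
    by_contra hlt
    push_neg at hlt
    have hsub : {ω | X ω ≤ (n : ℝ)} ⊆ {ω | X ω ≤ -c} := by
      intro ω hω
      simp only [Set.mem_setOf_eq] at *
      linarith
    have h2 : ENNReal.ofReal α < μ {ω | X ω ≤ -c} := lt_of_lt_of_le hn (measure_mono hsub)
    have h3 : α < F (-c) := by
      rw [hFdef]
      exact (ENNReal.ofReal_lt_iff_lt_toReal hα0.le (measure_ne_top μ _)).1 h2
    simp only [Set.mem_setOf_eq] at hc
    linarith
  have hvmem : F (-v) ≤ α := hclosed.csInf_mem hne hbdd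
  have hge : α ≤ F (-v) := by
    refine ge_of_tendsto ((hGcont.tendsto v).mono_left (nhdsWithin_le_nhds (s := Set.Iio v))) ?_
    filter_upwards [self_mem_nhdsWithin] with c hc
    have hcv : c < v := hc
    have hnot : c ∉ {c | F (-c) ≤ α} := fun hmem => absurd (csInf_le hbdd hmem) (not_le.2 hcv)
    exact le_of_lt (lt_of_not_ge fun h => hnot h)
  have hFv : F (-v) = α := le_antisymm hvmem hge
  have hEv : {ω | -X ω ≥ v} = {ω | X ω ≤ -v} := by
    ext ω; simp only [Set.mem_setOf_eq, ge_iff_le, le_neg]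
  rw [hEv]
  have hμE : (μ {ω | X ω ≤ -v}).toReal = α := hFv
  have hμE' : (μ {ω | X ω < -v}).toReal = α := by
    rw [aux_lt_le μ X hX hcdf (-v)]; exact hFv
  rw [hμE]
  have hint : ∀ η : ℝ, Integrable (fun ω => max (η - X ω) 0) μ := fun η =>
    ((integrable_const η).sub hXint).pos_part
  -- integral formula
  have hI : ∀ η : ℝ, ∫ ω, max (η - X ω) 0 ∂μ
      = η * (μ {ω | X ω ≤ η}).toReal - ∫ ω in {ω | X ω ≤ η}, X ω ∂μ := by
    intro η
    have h1 : (fun ω => max (η - X ω) 0)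
        = fun ω => ({ω | X ω ≤ η}.indicator (fun ω => η - X ω)) ω := by
      funext ω
      rw [aux_max_indicator η (X ω)]
      simp only [Set.indicator_apply, Set.mem_setOf_eq]
    rw [h1, integral_indicator (hFmeas η),
      integral_sub (integrable_const η) hXint.integrableOn, setIntegral_const, smul_eq_mul, measureReal_def]
    ring
  -- value at -v
  have hval : (1 / α) * (∫ ω, max (-v - X ω) 0 ∂μ) - (-v)
      = α⁻¹ * ∫ ω in {ω | X ω ≤ -v}, (-X ω) ∂μ := by
    rw [hI (-v), hμE]
    have hneg : ∫ ω in {ω | X ω ≤ -v}, (-X ω) ∂μ = -∫ ω in {ω | X ω ≤ -v}, X ω ∂μ :=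
      integral_neg X
    rw [hneg]
    field_simp
    ring
  -- lower bound
  have hlb : ∀ η : ℝ, (1 / α) * (∫ ω, max (-v - X ω) 0 ∂μ) - (-v)
      ≤ (1 / α) * ∫ ω, max (η - X ω) 0 ∂μ - η := by
    intro η
    have hmlt : MeasurableSet {ω | X ω < -v} := hX measurableSet_Iio
    have hptw : ∀ ω, max (-v - X ω) 0
        + (η + v) * ({ω | X ω < -v}.indicator (fun _ => (1 : ℝ)) ω) ≤ max (η - X ω) 0 := by
      intro ω
      have h := aux_pt (X ω) v η
      simpa only [Set.indicator_apply, Set.mem_setOf_eq] using h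
    have hind : Integrable (fun ω => (η + v) * ({ω | X ω < -v}.indicator (fun _ => (1 : ℝ)) ω)) μ :=
      ((integrable_const (1 : ℝ)).indicator hmlt).const_mul _
    have hintg : Integrable (fun ω => max (-v - X ω) 0
        + (η + v) * ({ω | X ω < -v}.indicator (fun _ => (1 : ℝ)) ω)) μ := (hint (-v)).add hind
    have hIle := integral_mono hintg (hint η) hptw
    rw [integral_add (hint (-v)) hind, integral_const_mul,
      integral_indicator_const (1 : ℝ) hmlt, smul_eq_mul, mul_one, measureReal_def, hμE'] at hIle
    have h1 : (1 / α) * ((∫ ω, max (-v - X ω) 0 ∂μ) + (η + v) * α)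
        = (1 / α) * (∫ ω, max (-v - X ω) 0 ∂μ) + (η + v) := by
      field_simp
    have h2 := mul_le_mul_of_nonneg_left hIle (le_of_lt (by positivity : (0:ℝ) < 1 / α))
    rw [h1] at h2
    linarith
  -- conclude
  refine le_antisymm ?_ ?_
  · calc (⨅ η : ℝ, ((1 / α) * ∫ ω, max (η - X ω) 0 ∂μ - η))
        ≤ (1 / α) * (∫ ω, max (-v - X ω) 0 ∂μ) - (-v) := by
          refine ciInf_le ⟨(1 / α) * (∫ ω, max (-v - X ω) 0 ∂μ) - (-v), ?_⟩ (-v)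
          rintro x ⟨η, rfl⟩
          exact hlb η
      _ = α⁻¹ * ∫ ω in {ω | X ω ≤ -v}, (-X ω) ∂μ := hval
  · rw [← hval]
    exact le_ciInf fun η => hlb η
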